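/- Let n ≥ 1, d ≥ 1, and let A be a symmetric (n+1)×(n+1) real matrix. For an interior point Z = (Z^(1),…,Z^(n)) of the complex matrix simplex Δ_{n,d}, set Z^(n+1) := Id − Σ_{k=1}^n Z^(k), and for an n-tuple Λ = (Λ^(1),…,Λ^(n)) of d×d Hermitian complex matrices set Λ^(n+1) := 0 and define the quadratic form Q_Z(Λ) := Σ_{1 ≤ p < q ≤ n+1} A_{pq} [ trace(Z^(q) C_{pq} Z^(p) C_{pq}) + trace(Z^(p) C_{pq} Z^(q) C_{pq}) ], where C_{pq} is the entrywise complex conjugate of Λ^(p) − Λ^(q). Then the following are equivalent: (i) for every interior point Z of Δ_{n,d} and every n-tuple Λ of Hermitian matrices with some Λ^(p) ≠ 0, Q_Z(Λ) is a positive real number; (ii) A_{pq} ≥ 0 for all p ≠ q, and A is irreducible, i.e. for all p ≠ q in {1,…,n+1} there exist indices p = p_0, p_1, …, p_k = q with A_{p_i p_{i+1}} > 0 for all i. -/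

import Mathlib

open Finset Matrix ComplexOrder

/-- The tuple `(Z^(1),…,Z^(n))` extended by `Z^(n+1) = Id - Σ Z^(k)`. -/
noncomputable def Zext9 {n d : ℕ} (Z : Fin n → Matrix (Fin d) (Fin d) ℂ) :
    Fin (n + 1) → Matrix (Fin d) (Fin d) ℂ :=
  Fin.snoc Z (1 - ∑ k, Z k)

/-- The tuple `(Λ^(1),…,Λ^(n))` extended by `Λ^(n+1) = 0`. -/
noncomputable def Lext9 {n d : ℕ} (Λ : Fin n → Matrix (Fin d) (Fin d) ℂ) :
    Fin (n + 1) → Matrix (Fin d) (Fin d) ℂ :=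
  Fin.snoc Λ 0

/-- The quadratic form `Q_Z(Λ)` associated with the co-metric `Γ_A` of the first matrix
Dirichlet model:
`Q_Z(Λ) = Σ_{p<q} A_{pq} [tr(Z^(q) C_{pq} Z^(p) C_{pq}) + tr(Z^(p) C_{pq} Z^(q) C_{pq})]`,
where `C_{pq}` is the entrywise conjugate of `Λ^(p) - Λ^(q)`. -/
noncomputable def Qform9 {n d : ℕ} (A : Fin (n + 1) → Fin (n + 1) → ℝ)
    (Z Λ : Fin n → Matrix (Fin d) (Fin d) ℂ) : ℂ :=
  ∑ p : Fin (n + 1), ∑ q ∈ Finset.univ.filter (fun q => p < q),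
    (A p q : ℂ) *
      ((Zext9 Z q * ((Lext9 Λ p - Lext9 Λ q).map (starRingEnd ℂ))
          * Zext9 Z p * ((Lext9 Λ p - Lext9 Λ q).map (starRingEnd ℂ))).trace
        + (Zext9 Z p * ((Lext9 Λ p - Lext9 Λ q).map (starRingEnd ℂ))
          * Zext9 Z q * ((Lext9 Λ p - Lext9 Λ q).map (starRingEnd ℂ))).trace)

/-! ### Auxiliary lemmas -/

lemma posDef_smul_one {d : ℕ} {c : ℝ} (hc : 0 < c) :
    ((c : ℂ) • (1 : Matrix (Fin d) (Fin d) ℂ)).PosDef := by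
  rw [Matrix.smul_one_eq_diagonal]
  exact Matrix.posDef_diagonal_iff.mpr fun i => Complex.zero_lt_real.mpr hc

lemma herm_smul_one {d : ℕ} (c : ℝ) :
    ((c : ℂ) • (1 : Matrix (Fin d) (Fin d) ℂ)).IsHermitian := by
  unfold Matrix.IsHermitian
  rw [Matrix.conjTranspose_smul, Matrix.conjTranspose_one]
  simp

lemma map_conj_smul_one {d : ℕ} (c : ℝ) :
    (((c : ℂ) • (1 : Matrix (Fin d) (Fin d) ℂ)).map (starRingEnd ℂ)) = (c : ℂ) • 1 := by
  ext i j
  simp only [Matrix.map_apply, Matrix.smul_apply, Matrix.one_apply, smul_eq_mul]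
  split_ifs <;> simp

lemma herm_map_conj {d : ℕ} {H : Matrix (Fin d) (Fin d) ℂ} (hH : H.IsHermitian) :
    (H.map (starRingEnd ℂ)).IsHermitian := by
  ext i j
  simp only [Matrix.conjTranspose_apply, Matrix.map_apply]
  rw [← hH.apply i j]
  simp [Matrix.conjTranspose_apply]

lemma map_conj_ne_zero {d : ℕ} {H : Matrix (Fin d) (Fin d) ℂ} (hH : H ≠ 0) :
    H.map (starRingEnd ℂ) ≠ 0 := by
  intro h
  apply hH
  ext i j
  have := congrFun (congrFun h i) j
  simp only [Matrix.map_apply, Matrix.zero_apply] at this ⊢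
  simpa using congrArg (starRingEnd ℂ) this

open scoped MatrixOrder in
lemma trace_quad_pos {d : ℕ} {X Y C : Matrix (Fin d) (Fin d) ℂ}
    (hX : X.PosDef) (hY : Y.PosDef) (hC : C.IsHermitian) :
    ∃ r : ℝ, (X * C * Y * C).trace = (r : ℂ) ∧ 0 ≤ r ∧ (C ≠ 0 → 0 < r) := by
  set S := CFC.sqrt X with hSdef
  set T := CFC.sqrt Y with hTdef
  have hSS : S * S = X := CFC.sqrt_mul_sqrt_self X hX.posSemidef.nonneg
  have hTT : T * T = Y := CFC.sqrt_mul_sqrt_self Y hY.posSemidef.nonneg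
  have hSH : Sᴴ = S := (CFC.sqrt_nonneg X).posSemidef.isHermitian
  have hTH : Tᴴ = T := (CFC.sqrt_nonneg Y).posSemidef.isHermitian
  set M := S * C * T with hMdef
  have hMH : Mᴴ = T * C * S := by
    rw [hMdef, Matrix.conjTranspose_mul, Matrix.conjTranspose_mul, hSH, hTH, hC.eq]
    simp [Matrix.mul_assoc]
  have key : M * Mᴴ = S * (C * (Y * (C * S))) := by
    rw [hMH, hMdef]
    simp only [Matrix.mul_assoc]
    rw [← Matrix.mul_assoc T T (C * S), hTT]
  have htr : (X * C * Y * C).trace = (M * Mᴴ).trace := by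
    rw [key, ← hSS]
    simp only [Matrix.mul_assoc]
    rw [Matrix.trace_mul_comm S (S * (C * (Y * C)))]
    simp only [Matrix.mul_assoc]
  refine ⟨∑ i, ∑ j, Complex.normSq (M i j), ?_, ?_, ?_⟩
  · rw [htr]
    simp only [Matrix.trace, Matrix.diag, Matrix.mul_apply, Matrix.conjTranspose_apply,
      Complex.star_def, Complex.mul_conj]
    push_cast
    rfl
  · exact Finset.sum_nonneg fun i _ => Finset.sum_nonneg fun j _ => Complex.normSq_nonneg _
  · intro hCne
    have hMne : M ≠ 0 := by
      intro hM0
      apply hCne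
      have hsd : IsUnit S.det := by
        have h1 : S.det * S.det = X.det := by rw [← Matrix.det_mul, hSS]
        have h2 : X.det ≠ 0 := hX.det_pos.ne'
        exact isUnit_iff_ne_zero.mpr (fun h => h2 (by rw [← h1, h, mul_zero]))
      have htd : IsUnit T.det := by
        have h1 : T.det * T.det = Y.det := by rw [← Matrix.det_mul, hTT]
        have h2 : Y.det ≠ 0 := hY.det_pos.ne'
        exact isUnit_iff_ne_zero.mpr (fun h => h2 (by rw [← h1, h, mul_zero]))
      calc C = (S⁻¹ * S) * C * (T * T⁻¹) := by
              rw [Matrix.nonsing_inv_mul _ hsd, Matrix.mul_nonsing_inv _ htd,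
                Matrix.one_mul, Matrix.mul_one]
        _ = S⁻¹ * (S * C * T) * T⁻¹ := by simp only [Matrix.mul_assoc]
        _ = 0 := by rw [← hMdef, hM0, Matrix.mul_zero, Matrix.zero_mul]
    obtain ⟨i, j, hij⟩ : ∃ i j, M i j ≠ 0 := by
      by_contra h
      push_neg at h
      exact hMne (by ext i j; simpa using h i j)
    have h1 : 0 < Complex.normSq (M i j) := Complex.normSq_pos.mpr hij
    have h2 : 0 < ∑ j', Complex.normSq (M i j') :=
      Finset.sum_pos' (fun _ _ => Complex.normSq_nonneg _) ⟨j, Finset.mem_univ j, h1⟩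
    exact Finset.sum_pos' (fun i' _ => Finset.sum_nonneg fun _ _ => Complex.normSq_nonneg _)
      ⟨i, Finset.mem_univ i, h2⟩

lemma Zext9_smul {n d : ℕ} (z : Fin n → ℝ) :
    Zext9 (d := d) (fun k => ((z k : ℝ) : ℂ) • 1)
      = fun s => (((Fin.snoc z (1 - ∑ k, z k) : Fin (n+1) → ℝ) s : ℝ) : ℂ)
          • (1 : Matrix (Fin d) (Fin d) ℂ) := by
  funext s
  refine Fin.lastCases ?_ (fun k => ?_) s
  · simp only [Zext9, Fin.snoc_last]
    push_cast
    rw [sub_smul, one_smul, Finset.sum_smul]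
  · simp only [Zext9, Fin.snoc_castSucc]

lemma Lext9_smul {n d : ℕ} (l : Fin n → ℝ) :
    Lext9 (d := d) (fun k => ((l k : ℝ) : ℂ) • 1)
      = fun s => (((Fin.snoc l 0 : Fin (n+1) → ℝ) s : ℝ) : ℂ)
          • (1 : Matrix (Fin d) (Fin d) ℂ) := by
  funext s
  refine Fin.lastCases ?_ (fun k => ?_) s
  · simp only [Lext9, Fin.snoc_last]
    norm_num
  · simp only [Lext9, Fin.snoc_castSucc]

lemma Qform9_scalar {n d : ℕ} (A : Fin (n + 1) → Fin (n + 1) → ℝ) (z l : Fin n → ℝ) :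
    Qform9 (d := d) A (fun k => ((z k : ℝ) : ℂ) • 1) (fun k => ((l k : ℝ) : ℂ) • 1)
      = ((∑ p : Fin (n + 1), ∑ q ∈ Finset.univ.filter (fun q => p < q),
          A p q * (2 * d * ((Fin.snoc z (1 - ∑ k, z k) : Fin (n+1) → ℝ) p
              * (Fin.snoc z (1 - ∑ k, z k) : Fin (n+1) → ℝ) q)
            * ((Fin.snoc l 0 : Fin (n+1) → ℝ) p - (Fin.snoc l 0 : Fin (n+1) → ℝ) q) ^ 2)
          : ℝ) : ℂ) := by
  unfold Qform9
  rw [Zext9_smul, Lext9_smul]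
  push_cast
  refine Finset.sum_congr rfl fun p _ => Finset.sum_congr rfl fun q _ => ?_
  set zp := (Fin.snoc z (1 - ∑ k, z k) : Fin (n+1) → ℝ) p
  set zq := (Fin.snoc z (1 - ∑ k, z k) : Fin (n+1) → ℝ) q
  set lp := (Fin.snoc l 0 : Fin (n+1) → ℝ) p
  set lq := (Fin.snoc l 0 : Fin (n+1) → ℝ) q
  have hsub : ((lp : ℂ) • (1 : Matrix (Fin d) (Fin d) ℂ)) - (lq : ℂ) • 1
      = (((lp - lq : ℝ) : ℂ)) • 1 := by push_cast; rw [sub_smul]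
  rw [hsub, map_conj_smul_one]
  simp only [Matrix.smul_mul, Matrix.mul_smul, Matrix.one_mul, Matrix.mul_one, smul_smul,
    Matrix.trace_smul, Matrix.trace_one, smul_eq_mul, Fintype.card_fin]
  push_cast
  ring

def Reach9 {n : ℕ} (A : Fin (n + 1) → Fin (n + 1) → ℝ) (p q : Fin (n + 1)) : Prop :=
  ∃ (m : ℕ) (path : Fin (m + 1) → Fin (n + 1)),
    path 0 = p ∧ path (Fin.last m) = q ∧
    ∀ i : Fin m, 0 < A (path i.castSucc) (path i.succ)

lemma reach9_refl {n : ℕ} (A : Fin (n + 1) → Fin (n + 1) → ℝ) (p : Fin (n + 1)) :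
    Reach9 A p p :=
  ⟨0, fun _ => p, rfl, rfl, fun i => i.elim0⟩

lemma reach9_step {n : ℕ} {A : Fin (n + 1) → Fin (n + 1) → ℝ} {p s t : Fin (n + 1)}
    (h : Reach9 A p s) (hst : 0 < A s t) : Reach9 A p t := by
  obtain ⟨m, path, h0, hl, hpos⟩ := h
  refine ⟨m + 1, Fin.snoc path t, ?_, ?_, ?_⟩
  · rw [show (0 : Fin (m + 2)) = Fin.castSucc 0 by rfl, Fin.snoc_castSucc]
    exact h0
  · simp [Fin.snoc_last]
  · intro i
    refine Fin.lastCases ?_ (fun j => ?_) i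
    · rw [Fin.snoc_castSucc, hl]
      have : (Fin.last m).succ = Fin.last (m + 1) := rfl
      rw [this, Fin.snoc_last]
      exact hst
    · rw [Fin.snoc_castSucc, Fin.succ_castSucc, Fin.snoc_castSucc]
      exact hpos j

lemma path_const {α : Sort*} {m : ℕ} (g : Fin (m + 1) → α)
    (h : ∀ i : Fin m, g i.castSucc = g i.succ) : g 0 = g (Fin.last m) := by
  have key : ∀ j : Fin (m + 1), g 0 = g j := by
    intro j
    induction j using Fin.induction with
    | zero => rfl
    | succ i ih => exact ih.trans (h i)
  exact key _

lemma sum_pairs {N : ℕ} (g : Fin N → Fin N → ℝ) (hsym : ∀ p q, g p q = g q p)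
    (hdiag : ∀ p, g p p = 0) :
    ∑ p, ∑ q ∈ Finset.univ.filter (fun q => p < q), g p q
      = (1 / 2) * ∑ p, ∑ q, g p q := by
  have h1 : ∀ p, ∑ q, g p q = (∑ q ∈ Finset.univ.filter (fun q => p < q), g p q)
      + ∑ q ∈ Finset.univ.filter (fun q => q < p), g p q := by
    intro p
    rw [← Finset.sum_filter_add_sum_filter_not univ (fun q => p < q) (g p)]
    congr 1
    have hset : Finset.univ.filter (fun q => ¬ p < q)
        = insert p (Finset.univ.filter (fun q => q < p)) := by
      ext q
      simp only [Finset.mem_filter, Finset.mem_univ, true_and, Finset.mem_insert, not_lt]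
      constructor
      · intro h
        rcases lt_or_eq_of_le h with h' | h'
        · exact Or.inr h'
        · exact Or.inl h'
      · rintro (rfl | h)
        · exact le_refl _
        · exact le_of_lt h
    rw [hset, Finset.sum_insert (by simp), hdiag p, zero_add]
  have h2 : ∑ p, ∑ q ∈ Finset.univ.filter (fun q => q < p), g p q
      = ∑ p, ∑ q ∈ Finset.univ.filter (fun q => p < q), g p q := by
    rw [Finset.sum_comm' (t' := Finset.univ)
      (s' := fun q => Finset.univ.filter (fun p => q < p))
      (by intro x y; simp [and_comm])]
    exact Finset.sum_congr rfl fun q _ => Finset.sum_congr rfl fun p _ => hsym p q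
  have h3 : ∑ p, ∑ q, g p q
      = 2 * ∑ p, ∑ q ∈ Finset.univ.filter (fun q => p < q), g p q := by
    calc ∑ p, ∑ q, g p q
        = ∑ p, ((∑ q ∈ Finset.univ.filter (fun q => p < q), g p q)
            + ∑ q ∈ Finset.univ.filter (fun q => q < p), g p q) :=
          Finset.sum_congr rfl fun p _ => h1 p
      _ = _ := by rw [Finset.sum_add_distrib, h2]; ring
  rw [h3]; ring

set_option maxHeartbeats 1000000 in
theorem stmt_9 (n d : ℕ) (hn : 1 ≤ n) (hd : 1 ≤ d)
    (A : Fin (n + 1) → Fin (n + 1) → ℝ)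
    (hsymm : ∀ p q, A p q = A q p) :
    (∀ Z : Fin n → Matrix (Fin d) (Fin d) ℂ,
        (∀ k, (Z k).PosDef) → (1 - ∑ k, Z k).PosDef →
        ∀ Λ : Fin n → Matrix (Fin d) (Fin d) ℂ,
          (∀ k, (Λ k).IsHermitian) → (∃ k, Λ k ≠ 0) →
          ∃ r : ℝ, 0 < r ∧ Qform9 A Z Λ = (r : ℂ))
    ↔ ((∀ p q, p ≠ q → 0 ≤ A p q)
        ∧ ∀ p q : Fin (n + 1), p ≠ q →
            ∃ (m : ℕ) (path : Fin (m + 1) → Fin (n + 1)),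
              path 0 = p ∧ path (Fin.last m) = q ∧
              ∀ i : Fin m, 0 < A (path i.castSucc) (path i.succ)) := by
  classical
  constructor
  · -- forward direction
    intro H
    have hnonneg : ∀ p q, p ≠ q → 0 ≤ A p q := by
      intro p q hpq
      by_contra hneg
      push_neg at hneg
      obtain ⟨p', q', hp'q', hplast, hneg'⟩ :
          ∃ p' q' : Fin (n+1), p' ≠ q' ∧ p' ≠ Fin.last n ∧ A p' q' < 0 := by
        by_cases hp : p = Fin.last n
        · refine ⟨q, p, hpq.symm, ?_, by rw [← hsymm]; exact hneg⟩
          intro h; exact hpq (hp.trans h.symm)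
        · exact ⟨p, q, hpq, hp, hneg⟩
      set a : ℝ := -A p' q' with ha
      have ha0 : 0 < a := by simp only [ha]; linarith
      set B : ℝ := (∑ t, |A p' t|) + 1 with hB
      have hBsum : 0 ≤ ∑ t, |A p' t| := Finset.sum_nonneg fun t _ => abs_nonneg _
      have hB1 : 1 ≤ B := by simp only [hB]; linarith
      have hB0 : 0 < B := by linarith
      have hn1 : (1:ℝ) ≤ (n:ℝ) := by exact_mod_cast hn
      set ε : ℝ := min (1/(2*(n:ℝ))) (a/(2*B)) with hε
      have hεpos : 0 < ε := lt_min (by positivity) (by positivity)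
      have hε1 : ε ≤ 1/(2*(n:ℝ)) := min_le_left _ _
      have hε2 : ε ≤ a/(2*B) := min_le_right _ _
      have h2nε : ε * (2*(n:ℝ)) ≤ 1 := by
        rw [← le_div_iff₀ (by positivity)]; simpa using hε1
      have h2Bε : ε * (2*B) ≤ a := by
        rw [← le_div_iff₀ (by positivity)]; simpa using hε2
      have hnε : (n:ℝ) * ε ≤ 1/2 := by nlinarith
      set z : Fin n → ℝ := fun k => if k.castSucc = q' then 1 - (n:ℝ)*ε else ε with hzdef
      set l : Fin n → ℝ := fun k => if k.castSucc = p' then 1 else 0 with hldef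
      have hzpos : ∀ k, 0 < z k := by
        intro k; simp only [hzdef]; split_ifs with h
        · linarith
        · exact hεpos
      have hz' : ∀ t : Fin (n+1), (Fin.snoc z (1 - ∑ k, z k) : Fin (n+1) → ℝ) t
          = if t = q' then 1 - (n:ℝ)*ε else ε := by
        have hsumz : (∑ k, z k) = if q' = Fin.last n then (n:ℝ)*ε else 1 - ε := by
          by_cases hq : q' = Fin.last n
          · rw [if_pos hq]
            have hz : ∀ k : Fin n, z k = ε := by
              intro k; simp only [hzdef]
              rw [if_neg]
              intro h
              exact (Fin.castSucc_lt_last k).ne (h.trans hq)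
            rw [Finset.sum_congr rfl fun k _ => hz k]
            simp [Finset.sum_const, Finset.card_univ, nsmul_eq_mul]
          · rw [if_neg hq]
            set j := q'.castPred hq with hj
            have hcast : Fin.castSucc j = q' := Fin.castSucc_castPred q' hq
            have hz : ∀ k : Fin n, z k = ε + (if k = j then 1 - ((n:ℝ)+1)*ε else 0) := by
              intro k; simp only [hzdef]
              by_cases hk : k = j
              · subst hk
                rw [if_pos hcast, if_pos rfl]; ring
              · rw [if_neg, if_neg hk]
                · ring
                · intro h; exact hk (Fin.castSucc_injective n (h.trans hcast.symm))
            rw [Finset.sum_congr rfl fun k _ => hz k, Finset.sum_add_distrib,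
              Finset.sum_ite_eq' univ j (fun _ => 1 - ((n:ℝ)+1)*ε)]
            simp [Finset.sum_const, Finset.card_univ, nsmul_eq_mul]
            ring
        intro t
        refine Fin.lastCases ?_ (fun k => ?_) t
        · rw [Fin.snoc_last, hsumz]
          by_cases hq : q' = Fin.last n
          · rw [if_pos hq, if_pos hq.symm]
          · rw [if_neg hq, if_neg (fun h => hq h.symm)]; ring
        · rw [Fin.snoc_castSucc]
      have hl' : ∀ t : Fin (n+1), (Fin.snoc l 0 : Fin (n+1) → ℝ) t
          = if t = p' then 1 else 0 := by
        intro t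
        refine Fin.lastCases ?_ (fun k => ?_) t
        · rw [Fin.snoc_last, if_neg (fun h => hplast h.symm)]
        · rw [Fin.snoc_castSucc]
      have hZv : ∀ k, (((z k : ℝ):ℂ) • (1 : Matrix (Fin d) (Fin d) ℂ)).PosDef :=
        fun k => posDef_smul_one (hzpos k)
      have hZl : ((1 : Matrix (Fin d) (Fin d) ℂ) - ∑ k, ((z k : ℝ):ℂ) • 1).PosDef := by
        have he : ((1 : Matrix (Fin d) (Fin d) ℂ) - ∑ k, ((z k : ℝ):ℂ) • 1)
            = (((1 - ∑ k, z k : ℝ)):ℂ) • 1 := by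
          have h := congrFun (Zext9_smul (d := d) z) (Fin.last n)
          simpa [Zext9, Fin.snoc_last] using h
        rw [he]
        apply posDef_smul_one
        have h := hz' (Fin.last n)
        rw [Fin.snoc_last] at h
        rw [h]; split_ifs <;> linarith
      have hLh : ∀ k, (((l k : ℝ):ℂ) • (1 : Matrix (Fin d) (Fin d) ℂ)).IsHermitian :=
        fun k => herm_smul_one (l k)
      have hLne : ∃ k, ((l k : ℝ):ℂ) • (1 : Matrix (Fin d) (Fin d) ℂ) ≠ 0 := by
        refine ⟨p'.castPred hplast, ?_⟩
        have hl1 : l (p'.castPred hplast) = 1 := by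
          simp only [hldef]; rw [if_pos (Fin.castSucc_castPred p' hplast)]
        rw [hl1]
        intro hcon
        have i0 : Fin d := ⟨0, hd⟩
        have := congrFun (congrFun hcon i0) i0
        simp [Matrix.one_apply] at this
      obtain ⟨r, hr, hQ⟩ := H _ hZv hZl _ hLh hLne
      rw [Qform9_scalar] at hQ
      set g : Fin (n+1) → Fin (n+1) → ℝ := fun p0 q0 =>
        A p0 q0 * (2 * d * ((Fin.snoc z (1 - ∑ k, z k) : Fin (n+1) → ℝ) p0
            * (Fin.snoc z (1 - ∑ k, z k) : Fin (n+1) → ℝ) q0)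
          * ((Fin.snoc l 0 : Fin (n+1) → ℝ) p0 - (Fin.snoc l 0 : Fin (n+1) → ℝ) q0) ^ 2)
        with hg
      have hQr : (∑ p0, ∑ q0 ∈ Finset.univ.filter (fun q0 => p0 < q0), g p0 q0) = r :=
        Complex.ofReal_inj.mp hQ
      have hgval : ∀ p0 q0, g p0 q0 = A p0 q0
          * (2 * d * ((if p0 = q' then 1 - (n:ℝ)*ε else ε) * (if q0 = q' then 1 - (n:ℝ)*ε else ε))
          * ((if p0 = p' then (1:ℝ) else 0) - (if q0 = p' then (1:ℝ) else 0)) ^ 2) := by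
        intro p0 q0
        simp only [hg]
        rw [hz' p0, hz' q0, hl' p0, hl' q0]
      have hgsym : ∀ p0 q0, g p0 q0 = g q0 p0 := by
        intro p0 q0
        rw [hgval, hgval, hsymm p0 q0]; ring
      have hgdiag : ∀ p0, g p0 p0 = 0 := by
        intro p0; rw [hgval]; ring
      rw [sum_pairs g hgsym hgdiag] at hQr
      -- evaluate the full double sum
      have hzero : ∀ p0 q0, p0 ≠ p' → q0 ≠ p' → g p0 q0 = 0 := by
        intro p0 q0 h1 h2
        rw [hgval, if_neg h1, if_neg h2]; ring
      have hrow : ∀ p0, p0 ≠ p' → (∑ q0, g p0 q0) = g p0 p' := by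
        intro p0 h
        exact Finset.sum_eq_single_of_mem p' (Finset.mem_univ _)
          (fun q0 _ hq0 => hzero p0 q0 h hq0)
      have hsplit : (∑ p0, ∑ q0, g p0 q0)
          = (∑ q0, g p' q0) + ∑ p0 ∈ Finset.univ.erase p', g p0 p' := by
        rw [← Finset.add_sum_erase _ _ (Finset.mem_univ p')]
        congr 1
        exact Finset.sum_congr rfl fun p0 hp0 => hrow p0 (Finset.ne_of_mem_erase hp0)
      have hcol : (∑ q0, g p' q0) = ∑ q0 ∈ Finset.univ.erase p', g p' q0 := by
        rw [← Finset.add_sum_erase _ _ (Finset.mem_univ p'), hgdiag, zero_add]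
      have hsum2 : (∑ p0, ∑ q0, g p0 q0) = 2 * ∑ q0 ∈ Finset.univ.erase p', g p' q0 := by
        rw [hsplit, hcol]
        have : ∑ p0 ∈ Finset.univ.erase p', g p0 p'
            = ∑ p0 ∈ Finset.univ.erase p', g p' p0 :=
          Finset.sum_congr rfl fun p0 _ => hgsym p0 p'
        rw [this]; ring
      -- bound the sum
      set c : ℝ := 2 * d * ε with hc
      have hc0 : 0 < c := by
        have : (1:ℝ) ≤ (d:ℝ) := by exact_mod_cast hd
        simp only [hc]; nlinarith
      set h : Fin (n+1) → ℝ := fun q0 =>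
        if q0 = q' then A p' q' * (1 - (n:ℝ)*ε) else |A p' q0| * ε with hh
      have hbound : ∀ q0 ∈ Finset.univ.erase p', g p' q0 ≤ c * h q0 := by
        intro q0 hq0
        have hq0p' : q0 ≠ p' := Finset.ne_of_mem_erase hq0
        by_cases hq : q0 = q'
        · rw [hq, hgval p' q']
          simp only [hh, eq_self_iff_true, if_true, if_neg hp'q',
            if_neg (show q' ≠ p' from fun hcon => hp'q' hcon.symm)]
          apply le_of_eq
          simp only [hc]; ring
        · rw [hgval p' q0]
          simp only [hh, eq_self_iff_true, if_true, if_neg hp'q', if_neg hq, if_neg hq0p']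
          simp only [hc]
          have habs : A p' q0 * (2*(d:ℝ)*ε*ε) ≤ |A p' q0| * (2*(d:ℝ)*ε*ε) :=
            mul_le_mul_of_nonneg_right (le_abs_self _) (by positivity)
          nlinarith [habs]
      have hhs : (∑ q0 ∈ Finset.univ.erase p', h q0) < 0 := by
        have hq'mem : q' ∈ Finset.univ.erase p' :=
          Finset.mem_erase.mpr ⟨fun hcon => hp'q' hcon.symm, Finset.mem_univ _⟩
        rw [← Finset.add_sum_erase _ _ hq'mem]
        have hhq' : h q' = A p' q' * (1 - (n:ℝ)*ε) := by simp [hh]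
        have h1 : h q' ≤ -a/2 := by
          rw [hhq', ha]; nlinarith
        have h2 : (∑ q0 ∈ (Finset.univ.erase p').erase q', h q0) ≤ ε * (B - 1) := by
          have hcong : ∀ q0 ∈ (Finset.univ.erase p').erase q', h q0 = |A p' q0| * ε := by
            intro q0 hq0
            simp only [hh]
            rw [if_neg (Finset.ne_of_mem_erase hq0)]
          rw [Finset.sum_congr rfl hcong]
          have hsub : (∑ q0 ∈ (Finset.univ.erase p').erase q', |A p' q0|)
              ≤ ∑ q0, |A p' q0| :=
            Finset.sum_le_sum_of_subset_of_nonneg (Finset.subset_univ _)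
              (fun q0 _ _ => abs_nonneg _)
          have : (∑ q0 ∈ (Finset.univ.erase p').erase q', |A p' q0| * ε)
              = (∑ q0 ∈ (Finset.univ.erase p').erase q', |A p' q0|) * ε := by
            rw [Finset.sum_mul]
          rw [this]
          have hB' : (∑ q0, |A p' q0|) = B - 1 := by rw [hB]; ring
          nlinarith [hεpos.le]
        nlinarith [h2Bε, hεpos, hB1, ha0]
      have hT : (∑ q0 ∈ Finset.univ.erase p', g p' q0) < 0 := by
        calc (∑ q0 ∈ Finset.univ.erase p', g p' q0)
            ≤ ∑ q0 ∈ Finset.univ.erase p', c * h q0 := Finset.sum_le_sum hbound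
          _ = c * ∑ q0 ∈ Finset.univ.erase p', h q0 := by rw [Finset.mul_sum]
          _ < 0 := mul_neg_of_pos_of_neg hc0 hhs
      rw [hsum2] at hQr
      linarith
    refine ⟨hnonneg, ?_⟩
    intro p q hpq
    by_contra hR
    have hRq : ¬ Reach9 A p q := hR
    -- crossing edges vanish
    have hcross : ∀ s t : Fin (n+1), s ≠ t → Reach9 A p s → ¬ Reach9 A p t → A s t = 0 := by
      intro s t hst hs ht
      refine le_antisymm ?_ (hnonneg s t hst)
      by_contra hgt
      push_neg at hgt
      exact ht (reach9_step hs hgt)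
    set z : Fin n → ℝ := fun _ => 1/((n:ℝ)+1) with hzdef
    set l : Fin n → ℝ := fun k =>
      if (Reach9 A p k.castSucc ↔ Reach9 A p (Fin.last n)) then 0 else 1 with hldef
    have hz' : ∀ t : Fin (n+1), (Fin.snoc z (1 - ∑ k, z k) : Fin (n+1) → ℝ) t
        = 1/((n:ℝ)+1) := by
      intro t
      refine Fin.lastCases ?_ (fun k => ?_) t
      · rw [Fin.snoc_last]
        simp only [hzdef]
        rw [Finset.sum_const, Finset.card_univ, Fintype.card_fin, nsmul_eq_mul]
        field_simp
        ring
      · rw [Fin.snoc_castSucc]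
    have hl' : ∀ t : Fin (n+1), (Fin.snoc l 0 : Fin (n+1) → ℝ) t
        = if (Reach9 A p t ↔ Reach9 A p (Fin.last n)) then 0 else 1 := by
      intro t
      refine Fin.lastCases ?_ (fun k => ?_) t
      · rw [Fin.snoc_last, if_pos Iff.rfl]
      · rw [Fin.snoc_castSucc]
    have hnp : 0 < 1/((n:ℝ)+1) := by positivity
    have hZv : ∀ k, (((z k : ℝ):ℂ) • (1 : Matrix (Fin d) (Fin d) ℂ)).PosDef :=
      fun k => posDef_smul_one hnp
    have hZl : ((1 : Matrix (Fin d) (Fin d) ℂ) - ∑ k, ((z k : ℝ):ℂ) • 1).PosDef := by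
      have he : ((1 : Matrix (Fin d) (Fin d) ℂ) - ∑ k, ((z k : ℝ):ℂ) • 1)
          = (((1 - ∑ k, z k : ℝ)):ℂ) • 1 := by
        have h := congrFun (Zext9_smul (d := d) z) (Fin.last n)
        simpa [Zext9, Fin.snoc_last] using h
      rw [he]
      apply posDef_smul_one
      have h := hz' (Fin.last n)
      rw [Fin.snoc_last] at h
      rw [h]; exact hnp
    have hLh : ∀ k, (((l k : ℝ):ℂ) • (1 : Matrix (Fin d) (Fin d) ℂ)).IsHermitian :=
      fun k => herm_smul_one (l k)
    have hone : ∀ k : Fin n, l k = 1 → (((l k : ℝ):ℂ) • (1 : Matrix (Fin d) (Fin d) ℂ)) ≠ 0 := by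
      intro k hk
      rw [hk]
      intro hcon
      have i0 : Fin d := ⟨0, hd⟩
      have := congrFun (congrFun hcon i0) i0
      simp [Matrix.one_apply] at this
    have hLne : ∃ k, ((l k : ℝ):ℂ) • (1 : Matrix (Fin d) (Fin d) ℂ) ≠ 0 := by
      by_cases hlast : Reach9 A p (Fin.last n)
      · have hqlast : q ≠ Fin.last n := fun h => hRq (h ▸ hlast)
        refine ⟨q.castPred hqlast, hone _ ?_⟩
        simp only [hldef]
        rw [if_neg]
        rw [Fin.castSucc_castPred]
        intro hiff
        exact hRq (hiff.mpr hlast)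
      · have hplastne : p ≠ Fin.last n := fun h => hlast (h ▸ reach9_refl A p)
        refine ⟨p.castPred hplastne, hone _ ?_⟩
        simp only [hldef]
        rw [if_neg]
        rw [Fin.castSucc_castPred]
        intro hiff
        exact hlast (hiff.mp (reach9_refl A p))
    obtain ⟨r, hr, hQ⟩ := H _ hZv hZl _ hLh hLne
    rw [Qform9_scalar] at hQ
    have hzero : (∑ p0 : Fin (n+1), ∑ q0 ∈ Finset.univ.filter (fun q0 => p0 < q0),
        A p0 q0 * (2 * d * ((Fin.snoc z (1 - ∑ k, z k) : Fin (n+1) → ℝ) p0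
            * (Fin.snoc z (1 - ∑ k, z k) : Fin (n+1) → ℝ) q0)
          * ((Fin.snoc l 0 : Fin (n+1) → ℝ) p0 - (Fin.snoc l 0 : Fin (n+1) → ℝ) q0) ^ 2)) = 0 := by
      refine Finset.sum_eq_zero fun p0 _ => Finset.sum_eq_zero fun q0 hq0 => ?_
      have hlt : p0 < q0 := (Finset.mem_filter.mp hq0).2
      rw [hl' p0, hl' q0]
      by_cases hiff : (Reach9 A p p0 ↔ Reach9 A p q0)
      · have heq : (if (Reach9 A p p0 ↔ Reach9 A p (Fin.last n)) then (0:ℝ) else 1)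
            = (if (Reach9 A p q0 ↔ Reach9 A p (Fin.last n)) then (0:ℝ) else 1) :=
          if_congr (iff_congr hiff Iff.rfl) rfl rfl
        rw [heq]; ring
      · have hA0 : A p0 q0 = 0 := by
          by_cases hp0 : Reach9 A p p0
          · have hq0r : ¬ Reach9 A p q0 := fun h => hiff ⟨fun _ => h, fun _ => hp0⟩
            exact hcross p0 q0 hlt.ne hp0 hq0r
          · have hq0r : Reach9 A p q0 := by
              by_contra h
              exact hiff (iff_of_false hp0 h)
            rw [hsymm]
            exact hcross q0 p0 hlt.ne' hq0r hp0
        rw [hA0]; ring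
    rw [hzero] at hQ
    have : r = 0 := by exact_mod_cast hQ.symm
    linarith
  · -- reverse direction
    rintro ⟨hA, hirr⟩ Z hZpos hZlast Λ hherm hone
    obtain ⟨k₀, hk₀⟩ := hone
    have hZext : ∀ s, (Zext9 Z s).PosDef := by
      intro s
      refine Fin.lastCases ?_ (fun k => ?_) s
      · simpa [Zext9, Fin.snoc_last] using hZlast
      · simpa [Zext9, Fin.snoc_castSucc] using hZpos k
    have hLherm : ∀ s, (Lext9 Λ s).IsHermitian := by
      intro s
      refine Fin.lastCases ?_ (fun k => ?_) s
      · simp [Lext9, Fin.snoc_last, Matrix.isHermitian_zero]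
      · simpa [Lext9, Fin.snoc_castSucc] using hherm k
    set C : Fin (n + 1) → Fin (n + 1) → Matrix (Fin d) (Fin d) ℂ :=
      fun p q => (Lext9 Λ p - Lext9 Λ q).map (starRingEnd ℂ) with hC
    have hCherm : ∀ p q, (C p q).IsHermitian :=
      fun p q => herm_map_conj ((hLherm p).sub (hLherm q))
    have h1 : ∀ p q : Fin (n + 1), ∃ r : ℝ,
        (Zext9 Z q * C p q * Zext9 Z p * C p q).trace = (r : ℂ) ∧ 0 ≤ r ∧ (C p q ≠ 0 → 0 < r) :=
      fun p q => trace_quad_pos (hZext q) (hZext p) (hCherm p q)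
    have h2 : ∀ p q : Fin (n + 1), ∃ r : ℝ,
        (Zext9 Z p * C p q * Zext9 Z q * C p q).trace = (r : ℂ) ∧ 0 ≤ r ∧ (C p q ≠ 0 → 0 < r) :=
      fun p q => trace_quad_pos (hZext p) (hZext q) (hCherm p q)
    choose r1 hr1 using h1
    choose r2 hr2 using h2
    have hQ : Qform9 A Z Λ
        = ((∑ p : Fin (n + 1), ∑ q ∈ Finset.univ.filter (fun q => p < q),
            A p q * (r1 p q + r2 p q) : ℝ) : ℂ) := by
      unfold Qform9
      push_cast
      refine Finset.sum_congr rfl fun p _ => Finset.sum_congr rfl fun q _ => ?_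
      have e1 := (hr1 p q).1
      have e2 := (hr2 p q).1
      simp only [hC] at e1 e2
      rw [e1, e2]
    have hp0 : Lext9 Λ (Fin.castSucc k₀) ≠ Lext9 Λ (Fin.last n) := by
      simpa [Lext9, Fin.snoc_castSucc, Fin.snoc_last] using hk₀
    have hp0ne : Fin.castSucc k₀ ≠ Fin.last n := (Fin.castSucc_lt_last k₀).ne
    obtain ⟨m, path, hP0, hPl, hPpos⟩ := hirr (Fin.castSucc k₀) (Fin.last n) hp0ne
    have hstep : ∃ i : Fin m, Lext9 Λ (path i.castSucc) ≠ Lext9 Λ (path i.succ) := by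
      by_contra hcon
      push_neg at hcon
      have := path_const (fun j => Lext9 Λ (path j)) hcon
      simp only [hP0, hPl] at this
      exact hp0 this
    obtain ⟨i, hi⟩ := hstep
    have hApos : 0 < A (path i.castSucc) (path i.succ) := hPpos i
    have hst : path i.castSucc ≠ path i.succ := fun h => hi (congrArg _ h)
    obtain ⟨u, v, huv, hAuv, hLuv⟩ : ∃ u v : Fin (n + 1), u < v ∧ 0 < A u v
        ∧ Lext9 Λ u ≠ Lext9 Λ v := by
      rcases lt_or_gt_of_ne hst with h | h
      · exact ⟨_, _, h, hApos, hi⟩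
      · exact ⟨_, _, h, by rw [hsymm]; exact hApos, hi.symm⟩
    have hCuv : C u v ≠ 0 := map_conj_ne_zero (sub_ne_zero.mpr hLuv)
    have hterm_nonneg : ∀ p q : Fin (n + 1), p < q → 0 ≤ A p q * (r1 p q + r2 p q) := by
      intro p q hpq
      exact mul_nonneg (hA p q hpq.ne) (add_nonneg (hr1 p q).2.1 (hr2 p q).2.1)
    refine ⟨_, ?_, hQ⟩
    have houter : ∀ p : Fin (n + 1), 0 ≤ ∑ q ∈ Finset.univ.filter (fun q => p < q),
        A p q * (r1 p q + r2 p q) := by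
      intro p
      refine Finset.sum_nonneg fun q hq => ?_
      exact hterm_nonneg p q (Finset.mem_filter.mp hq).2
    refine Finset.sum_pos' (fun p _ => houter p) ⟨u, Finset.mem_univ u, ?_⟩
    refine Finset.sum_pos' (fun q hq => hterm_nonneg u q (Finset.mem_filter.mp hq).2)
      ⟨v, Finset.mem_filter.mpr ⟨Finset.mem_univ v, huv⟩, ?_⟩
    have hr1pos := (hr1 u v).2.2 hCuv
    have hr2nn : 0 ≤ r2 u v := (hr2 u v).2.1
    nlinarith [hAuv]
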